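/- If (α₁, α₂, α₃¹, …, α₃ʳ, α₄, α₅) is an admissible tuple in which the entries α₃¹, …, α₃ʳ are all ≥ 0, then F(α) does not belong to Diff₃. -/

import Mathlib

/-- `Diff₁ = {(s, s, b·s + q) : -r ≤ s ≤ r, r-n ≤ q ≤ n-r}`, in coordinates recording the
coefficients of `D_t, D_y, D_v` in the Picard group. -/
def Diff1 (n r b : ℤ) : Set (ℤ × ℤ × ℤ) :=
  {p | ∃ s q : ℤ, -r ≤ s ∧ s ≤ r ∧ r - n ≤ q ∧ q ≤ n - r ∧
    p = (s, s, b * s + q)}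

/-- `Diff₂ = {(s, s-1, b·s + q) : 1-r ≤ s ≤ r, r-n+1 ≤ q ≤ n-r}`. -/
def Diff2 (n r b : ℤ) : Set (ℤ × ℤ × ℤ) :=
  {p | ∃ s q : ℤ, 1 - r ≤ s ∧ s ≤ r ∧ r - n + 1 ≤ q ∧ q ≤ n - r ∧
    p = (s, s - 1, b * s + q)}

/-- `Diff₃ = {(s, s+1, b·s + q) : -r ≤ s ≤ r-1, r-n ≤ q ≤ n-r-1}`. -/
def Diff3 (n r b : ℤ) : Set (ℤ × ℤ × ℤ) :=
  {p | ∃ s q : ℤ, -r ≤ s ∧ s ≤ r - 1 ∧ r - n ≤ q ∧ q ≤ n - r - 1 ∧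
    p = (s, s + 1, b * s + q)}

/-- The predicate `P` on `ℤ/5` holds exactly on a cyclically consecutive block of length `m`
(starting at some index `i`). -/
def IsCyclicBlock (P : Fin 5 → Prop) (m : ℕ) : Prop :=
  ∃ i : Fin 5, ∀ k : Fin 5, P k ↔ ∃ d : ℕ, d < m ∧ k = i + Fin.ofNat 5 d

/-- A tuple `(α₁, α₂, α₃¹, …, α₃ʳ, α₄, α₅)` (with `α₃ʲ = a3 j` for `1 ≤ j ≤ r`) is
*admissible* if: the entries `α₃¹, …, α₃ʳ` are all `≤ -1` or all `≥ 0`; the set of negative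
groups (group `3` being negative when all `α₃ʲ < 0`) is a cyclically consecutive block in
`(1,2,3,4,5)` of size exactly `2`, `3` or `5`; and if `α₁ < 0` then `α₁ ≤ -(n-r)`. -/
def Admissible (n r : ℤ) (α₁ α₂ α₄ α₅ : ℤ) (a3 : ℤ → ℤ) : Prop :=
  ((∀ j ∈ Finset.Icc 1 r, a3 j ≤ -1) ∨ (∀ j ∈ Finset.Icc 1 r, 0 ≤ a3 j)) ∧
  (∃ m ∈ ({2, 3, 5} : Set ℕ),
    IsCyclicBlock ![α₁ < 0, α₂ < 0, ∀ j ∈ Finset.Icc 1 r, a3 j < 0, α₄ < 0, α₅ < 0] m) ∧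
  (α₁ < 0 → α₁ ≤ -(n - r))

/-- `F(α) = (α₄ + Σ_{j=1}^r α₃ʲ, α₂ - α₅ + Σ_{j=1}^r α₃ʲ,
α₁ + b·α₃¹ + Σ_{j=2}^r (b - c_j)·α₃ʲ + α₅)`. -/
noncomputable def Fmap (r b : ℤ) (c : ℤ → ℤ) (α₁ α₂ α₄ α₅ : ℤ) (a3 : ℤ → ℤ) : ℤ × ℤ × ℤ :=
  (α₄ + ∑ j ∈ Finset.Icc 1 r, a3 j,
   α₂ - α₅ + ∑ j ∈ Finset.Icc 1 r, a3 j,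
   α₁ + b * a3 1 + (∑ j ∈ Finset.Icc 2 r, (b - c j) * a3 j) + α₅)

/-- If `(α₁, α₂, α₃¹, …, α₃ʳ, α₄, α₅)` is an admissible tuple in which the
entries `α₃¹, …, α₃ʳ` are all `≥ 0`, then `F(α) ∉ Diff₃`. -/
lemma ex2 (i k : Fin 5) : (∃ d : ℕ, d < 2 ∧ k = i + Fin.ofNat 5 d) ↔ (k = i ∨ k = i + 1) := by
  constructor
  · rintro ⟨d, hd, rfl⟩
    interval_cases d
    · left; simp
    · right; rfl
  · rintro (rfl | rfl)
    · exact ⟨0, by norm_num, by simp⟩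
    · exact ⟨1, by norm_num, rfl⟩

lemma ex3 (i k : Fin 5) : (∃ d : ℕ, d < 3 ∧ k = i + Fin.ofNat 5 d) ↔
    (k = i ∨ k = i + 1 ∨ k = i + 2) := by
  constructor
  · rintro ⟨d, hd, rfl⟩
    interval_cases d
    · left; simp
    · right; left; rfl
    · right; right; norm_num
  · rintro (rfl | rfl | rfl)
    · exact ⟨0, by norm_num, by simp⟩
    · exact ⟨1, by norm_num, rfl⟩
    · exact ⟨2, by norm_num, by norm_num⟩

lemma ex5 (i k : Fin 5) : (∃ d : ℕ, d < 5 ∧ k = i + Fin.ofNat 5 d) := by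
  refine ⟨(k - i).val, (k - i).isLt, ?_⟩
  simp [Fin.cast_val_eq_self]

lemma block_signs (P : Fin 5 → Prop) (m : ℕ) (hm : m = 2 ∨ m = 3 ∨ m = 5)
    (hblk : IsCyclicBlock P m) (h2 : ¬ P 2) :
    (P 0 ∧ P 1 ∧ ¬P 3 ∧ ¬P 4) ∨ (¬P 0 ∧ ¬P 1 ∧ P 3 ∧ P 4) ∨
    (P 0 ∧ ¬P 1 ∧ ¬P 3 ∧ P 4) ∨ (P 0 ∧ ¬P 1 ∧ P 3 ∧ P 4) ∨
    (P 0 ∧ P 1 ∧ ¬P 3 ∧ P 4) := by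
  obtain ⟨i, hi⟩ := hblk
  have hcase : i = 0 ∨ i = 1 ∨ i = 2 ∨ i = 3 ∨ i = 4 := by fin_cases i <;> simp
  rcases hm with rfl | rfl | rfl
  · rcases hcase with rfl | rfl | rfl | rfl | rfl <;>
      simp [hi, ex2] at h2 ⊢ <;> revert h2 <;> decide
  · rcases hcase with rfl | rfl | rfl | rfl | rfl <;>
      simp [hi, ex3] at h2 ⊢ <;> revert h2 <;> decide
  · exact absurd ((hi 2).mpr (ex5 i 2)) h2

theorem fmap_not_in_diff3_of_a3_nonneg (n r b : ℤ) (hr : 1 ≤ r) (hrn : r ≤ n - 1) (hb : 0 ≤ b)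
    (c : ℤ → ℤ) (hc : ∀ j ∈ Finset.Icc (2 : ℤ) r, 0 ≤ c j)
    (α₁ α₂ α₄ α₅ : ℤ) (a3 : ℤ → ℤ)
    (hadm : Admissible n r α₁ α₂ α₄ α₅ a3)
    (hpos : ∀ j ∈ Finset.Icc (1 : ℤ) r, 0 ≤ a3 j) :
    Fmap r b c α₁ α₂ α₄ α₅ a3 ∉ Diff3 n r b := by
  obtain ⟨-, ⟨m, hm, hblk⟩, hneg1⟩ := hadm
  set P : Fin 5 → Prop :=
    ![α₁ < 0, α₂ < 0, ∀ j ∈ Finset.Icc 1 r, a3 j < 0, α₄ < 0, α₅ < 0] with hP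
  have h1mem : (1 : ℤ) ∈ Finset.Icc (1 : ℤ) r := by simp [Finset.mem_Icc]; omega
  have h2 : ¬ P 2 := by
    show ¬ (∀ j ∈ Finset.Icc (1:ℤ) r, a3 j < 0)
    intro h
    exact absurd (h 1 h1mem) (not_lt.2 (hpos 1 h1mem))
  have hm' : m = 2 ∨ m = 3 ∨ m = 5 := by simpa using hm
  have hd := block_signs P m hm' hblk h2
  have e0 : P 0 = (α₁ < 0) := rfl
  have e1 : P 1 = (α₂ < 0) := rfl
  have e3 : P 3 = (α₄ < 0) := rfl
  have e4 : P 4 = (α₅ < 0) := rfl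
  rw [e0, e1, e3, e4] at hd
  rintro ⟨s, q, hs1, hs2, hq1, hq2, heq⟩
  rw [Fmap, Prod.mk.injEq, Prod.mk.injEq] at heq
  obtain ⟨hA, hB, hC⟩ := heq
  set S := ∑ j ∈ Finset.Icc (1:ℤ) r, a3 j with hSdef
  set S2 := ∑ j ∈ Finset.Icc (2:ℤ) r, a3 j with hS2def
  have hS0 : 0 ≤ S := Finset.sum_nonneg hpos
  have hins : Finset.Icc (1:ℤ) r = insert 1 (Finset.Icc 2 r) := by
    ext x; simp only [Finset.mem_Icc, Finset.mem_insert]; omega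
  have hsplit : S = a3 1 + S2 := by
    rw [hSdef, hins, Finset.sum_insert (by simp [Finset.mem_Icc])]
  have hT : (∑ j ∈ Finset.Icc (2:ℤ) r, (b - c j) * a3 j) ≤ b * S2 := by
    rw [hS2def, Finset.mul_sum]
    apply Finset.sum_le_sum
    intro j hj
    have h1 := hc j hj
    have h2 : 0 ≤ a3 j := by
      refine hpos j ?_
      simp only [Finset.mem_Icc] at hj ⊢; omega
    nlinarith
  -- second-minus-first coordinate relation
  have hkey : α₂ = α₄ + α₅ + 1 := by omega
  -- the third coordinate bound, used when α₄ ≥ 0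
  have hthird : ¬ (α₁ < 0 ∧ ¬ α₄ < 0 ∧ α₅ < 0) := by
    rintro ⟨ha1, ha4, ha5⟩
    have hba : 0 ≤ b * α₄ := mul_nonneg hb (by omega)
    have hbs : b * s = b * α₄ + b * a3 1 + b * S2 := by
      rw [← hA, hsplit]; ring
    have hq : q ≤ α₁ + α₅ - b * α₄ := by linarith
    have := hneg1 ha1
    omega
  rcases hd with ⟨h0, h1, h3, h4⟩ | ⟨h0, h1, h3, h4⟩ | ⟨h0, h1, h3, h4⟩ |
    ⟨h0, h1, h3, h4⟩ | ⟨h0, h1, h3, h4⟩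
  · omega
  · omega
  · exact hthird ⟨h0, h3, h4⟩
  · omega
  · exact hthird ⟨h0, h3, h4⟩
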